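/- Let Σ be a closed orientable stable minimal surface immersed in an oriented Riemannian 3-manifold whose sectional curvature is bounded below by -1. Then the area of Σ satisfies |Σ| ≥ 2π(g_Σ - 1), where g_Σ is the genus of Σ. -/

import Mathlib

open MeasureTheory Real

/-- A closed orientable stable minimal surface `Σ` immersed in an oriented
Riemannian 3-manifold with sectional curvature ≥ -1 has area `|Σ| ≥ 2π(g_Σ - 1)`.
The surface is encoded by its area measure `μ`; `Ric` is `Ric_M(ν,ν)`, `A2 = ‖A‖²`,
`Ksig` the intrinsic Gauss curvature, `KM` the ambient sectional curvature of the tangent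
plane. Stability is used through the test function 1. -/
theorem stable_minimal_surface_area_lower_bound
    {S : Type*} [MeasurableSpace S] (μ : Measure S) [IsFiniteMeasure μ]
    (g : ℕ)                      -- genus of the closed orientable surface Σ
    (Ric A2 Ksig KM : S → ℝ)
    (hRicInt : Integrable Ric μ) (hA2Int : Integrable A2 μ)
    (hKsigInt : Integrable Ksig μ) (hKMInt : Integrable KM μ)
    -- sectional curvature of the ambient 3-manifold bounded below by -1:
    (hKM : ∀ p, -1 ≤ KM p)
    -- hence Ric(ν,ν), a sum of two sectional curvatures, is ≥ -2:
    (hRic : ∀ p, -2 ≤ Ric p)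
    -- Gauss equation for a minimal surface: ‖A‖² = 2(K_M(T_pΣ) - K_Σ):
    (hGauss : ∀ p, A2 p = 2 * (KM p - Ksig p))
    -- stability, tested with the constant function 1:
    (hstab : ∫ p, (Ric p + A2 p) ∂μ ≤ 0)
    -- Gauss–Bonnet: ∫ K_Σ = 2πχ(Σ) = 2π(2 - 2g):
    (hGB : ∫ p, Ksig p ∂μ = 2 * π * (2 - 2 * (g : ℝ))) :
    2 * π * ((g : ℝ) - 1) ≤ (μ Set.univ).toReal := by
  set V := (μ Set.univ).toReal with hV
  have hV0 : 0 ≤ V := ENNReal.toReal_nonneg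
  have hRicLB : -2 * V ≤ ∫ p, Ric p ∂μ := by
    have := integral_mono (integrable_const (-2 : ℝ)) hRicInt hRic
    simpa [integral_const, smul_eq_mul, mul_comm, measureReal_def] using this
  have hKMLB : -1 * V ≤ ∫ p, KM p ∂μ := by
    have := integral_mono (integrable_const (-1 : ℝ)) hKMInt hKM
    simpa [integral_const, smul_eq_mul, mul_comm, measureReal_def] using this
  have hsplit : ∫ p, (Ric p + A2 p) ∂μ
      = (∫ p, Ric p ∂μ) + 2 * (∫ p, KM p ∂μ) - 2 * (∫ p, Ksig p ∂μ) := by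
    have h1 : ∫ p, (Ric p + A2 p) ∂μ = (∫ p, Ric p ∂μ) + ∫ p, A2 p ∂μ :=
      integral_add hRicInt hA2Int
    have h2 : ∫ p, A2 p ∂μ = 2 * (∫ p, KM p ∂μ) - 2 * (∫ p, Ksig p ∂μ) := by
      have : ∫ p, A2 p ∂μ = ∫ p, (2 * KM p - 2 * Ksig p) ∂μ := by
        refine integral_congr_ae (Filter.Eventually.of_forall fun p => ?_)
        rw [hGauss p]; ring
      rw [this, integral_sub (hKMInt.const_mul 2) (hKsigInt.const_mul 2),
        integral_const_mul, integral_const_mul]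
    rw [h1, h2]; ring
  have key : -2 * V + 2 * (-1 * V) - 2 * (2 * π * (2 - 2 * (g : ℝ))) ≤ 0 := by
    calc -2 * V + 2 * (-1 * V) - 2 * (2 * π * (2 - 2 * (g : ℝ)))
        ≤ (∫ p, Ric p ∂μ) + 2 * (∫ p, KM p ∂μ) - 2 * (∫ p, Ksig p ∂μ) := by
          rw [hGB]; gcongr
      _ = ∫ p, (Ric p + A2 p) ∂μ := hsplit.symm
      _ ≤ 0 := hstab
  nlinarith [key]
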